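/- Let b ∈ ℚ with b ∉ {0, 1, −1, 1/2, −1/2}, a ∈ ℚ nonzero, and f_n(x) = (1/a)(T_n(ax+b) − b). Then for all positive integers m < n, f_m(x) does not divide f_n(x) in ℚ[x]. -/

import Mathlib

open Polynomial

private lemma degree_T_complex : ∀ k : ℕ, (Polynomial.Chebyshev.T ℂ (k : ℤ)).degree = k := by
  intro k
  induction k using Nat.strong_induction_on with
  | _ k ih =>
    match k with
    | 0 => simp
    | 1 => simp
    | (k+2) =>
      have h : Polynomial.Chebyshev.T ℂ ((k:ℤ)+2)
          = 2 * X * Polynomial.Chebyshev.T ℂ ((k:ℤ)+1) - Polynomial.Chebyshev.T ℂ (k:ℤ) :=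
        Polynomial.Chebyshev.T_add_two ℂ k
      have h1 : (Polynomial.Chebyshev.T ℂ ((k:ℤ)+1)).degree = ((k+1 : ℕ) : WithBot ℕ) := by
        have := ih (k+1) (by omega); push_cast at this ⊢; exact this
      have h0 : (Polynomial.Chebyshev.T ℂ (k:ℤ)).degree = (k : WithBot ℕ) := ih k (by omega)
      have h2 : (2 * X : ℂ[X]).degree = 1 := by
        rw [show (2 * X : ℂ[X]) = C 2 * X by rw [map_ofNat]]; exact degree_C_mul_X (by norm_num)
      have hmul : (2 * X * Polynomial.Chebyshev.T ℂ ((k:ℤ)+1)).degree = ((k+2 : ℕ) : WithBot ℕ) := by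
        rw [degree_mul, h2, h1]
        push_cast
        ring
      have hlt : (Polynomial.Chebyshev.T ℂ (k:ℤ)).degree
          < (2 * X * Polynomial.Chebyshev.T ℂ ((k:ℤ)+1)).degree := by
        rw [h0, hmul]; exact_mod_cast by omega
      have : (((k:ℤ)+2) : ℤ) = ((k+2 : ℕ) : ℤ) := by push_cast; ring
      rw [this] at h
      rw [h, degree_sub_eq_left_of_degree_lt hlt, hmul]

theorem chebyshev_chain_no_divisibility (a b : ℚ) (ha : a ≠ 0)
    (hb : b ∉ ({0, 1, -1, 1/2, -1/2} : Set ℚ))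
    (f : ℕ → ℚ[X])
    (hf : ∀ j : ℕ, f j =
      C a⁻¹ * ((Polynomial.Chebyshev.T ℚ (j : ℤ)).comp (C a * X + C b) - C b))
    (m n : ℕ) (hm : 0 < m) (hmn : m < n) :
    ¬ f m ∣ f n := by
  intro hdvd
  set ℓ : ℚ[X] := C a * X + C b with hℓ
  have hcomp : ∀ j : ℕ, f j = C a⁻¹ * ((Polynomial.Chebyshev.T ℚ (j:ℤ) - C b).comp ℓ) := by
    intro j; rw [hf j]; simp [sub_comp]
  -- Step A : divisibility for the uncomposed polynomials
  have key : (Polynomial.Chebyshev.T ℚ (m:ℤ) - C b) ∣ (Polynomial.Chebyshev.T ℚ (n:ℤ) - C b) := by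
    obtain ⟨c, hc⟩ := hdvd
    rw [hcomp, hcomp] at hc
    have ha' : (C a⁻¹ : ℚ[X]) ≠ 0 := by simp [ha]
    have hP : (Polynomial.Chebyshev.T ℚ (n:ℤ) - C b).comp ℓ
        = (Polynomial.Chebyshev.T ℚ (m:ℤ) - C b).comp ℓ * c :=
      mul_left_cancel₀ ha' (hc.trans (mul_assoc _ _ _))
    set ℓ' : ℚ[X] := C a⁻¹ * (X - C b) with hℓ'
    have hℓℓ' : ℓ.comp ℓ' = X := by
      rw [hℓ, hℓ']
      simp only [add_comp, mul_comp, C_comp, X_comp]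
      rw [← mul_assoc, ← C_mul, mul_inv_cancel₀ ha]
      simp
    have e := congrArg (fun p => p.comp ℓ') hP
    simp only [mul_comp, Polynomial.comp_assoc, hℓℓ', comp_X] at e
    exact ⟨c.comp ℓ', e⟩
  -- Step B : map to ℂ
  have keyC : (Polynomial.Chebyshev.T ℂ (m:ℤ) - C (b:ℂ)) ∣ (Polynomial.Chebyshev.T ℂ (n:ℤ) - C (b:ℂ)) := by
    obtain ⟨c, hc⟩ := key
    refine ⟨c.map (algebraMap ℚ ℂ), ?_⟩
    have := congrArg (Polynomial.map (algebraMap ℚ ℂ)) hc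
    simpa [Polynomial.map_mul, Polynomial.map_sub, Polynomial.Chebyshev.map_T] using this
  -- Step C : find a common root
  have hdeg : (Polynomial.Chebyshev.T ℂ (m:ℤ) - C (b:ℂ)).degree = (m : WithBot ℕ) := by
    have hlt : (C (b:ℂ)).degree < (Polynomial.Chebyshev.T ℂ (m:ℤ)).degree := by
      rw [degree_T_complex m]
      exact lt_of_le_of_lt degree_C_le (by exact_mod_cast hm)
    rw [degree_sub_eq_left_of_degree_lt hlt, degree_T_complex m]
  obtain ⟨z, hz⟩ := Complex.exists_root (f := Polynomial.Chebyshev.T ℂ (m:ℤ) - C (b:ℂ))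
    (by rw [hdeg]; exact_mod_cast hm)
  have hzm : (Polynomial.Chebyshev.T ℂ (m:ℤ)).eval z = (b:ℂ) := by
    have := hz
    simp only [IsRoot, eval_sub, eval_C, sub_eq_zero] at this
    exact this
  have hzn : (Polynomial.Chebyshev.T ℂ (n:ℤ)).eval z = (b:ℂ) := by
    obtain ⟨c, hc⟩ := keyC
    have : (Polynomial.Chebyshev.T ℂ (n:ℤ) - C (b:ℂ)).eval z = 0 := by
      rw [hc, eval_mul, hz, zero_mul]
    simpa [sub_eq_zero] using this
  -- Step D : trig parametrization
  obtain ⟨θ, rfl⟩ := Complex.cos_surjective z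
  rw [Polynomial.Chebyshev.T_complex_cos] at hzm hzn
  set w : ℂ := Complex.exp (θ * Complex.I) with hw
  have hwne : w ≠ 0 := Complex.exp_ne_zero _
  have huv : ∀ j : ℕ, Complex.cos ((j:ℤ) * θ) = (b:ℂ) → w ^ j + (w ^ j)⁻¹ = 2 * (b:ℂ) := by
    intro j hj
    have hco : Complex.cos ((j:ℂ) * θ)
        = (Complex.exp ((j:ℂ) * θ * Complex.I) + Complex.exp (-((j:ℂ) * θ) * Complex.I)) / 2 := rfl
    have hej : Complex.exp ((j:ℂ) * θ * Complex.I) = w ^ j := by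
      rw [mul_assoc, Complex.exp_nat_mul]
    have hj' : Complex.cos ((j:ℂ) * θ) = (b:ℂ) := by exact_mod_cast hj
    rw [hco, neg_mul, Complex.exp_neg, hej] at hj'
    linear_combination 2 * hj'
  have hu := huv m hzm
  have hv := huv n hzn
  have hune : w ^ m ≠ 0 := pow_ne_zero _ hwne
  have hvne : w ^ n ≠ 0 := pow_ne_zero _ hwne
  -- Step E : w is a root of unity
  have hfact : (w ^ n - w ^ m) * (w ^ n - (w ^ m)⁻¹) = 0 := by
    have h1 : w ^ m * (w ^ m)⁻¹ = 1 := mul_inv_cancel₀ hune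
    have h2 : w ^ n * (w ^ n)⁻¹ = 1 := mul_inv_cancel₀ hvne
    linear_combination (w ^ n) * hv - (w ^ n) * hu + h1 - h2
  obtain ⟨N, hN, hwN⟩ : ∃ N : ℕ, 0 < N ∧ w ^ N = 1 := by
    rcases mul_eq_zero.mp hfact with h | h
    · refine ⟨n - m, by omega, ?_⟩
      have h' : w ^ n = w ^ m := sub_eq_zero.mp h
      have : w ^ (n - m) * w ^ m = 1 * w ^ m := by
        rw [← pow_add, one_mul, show n - m + m = n by omega, h']
      exact mul_right_cancel₀ hune this
    · refine ⟨n + m, by omega, ?_⟩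
      have h' : w ^ n = (w ^ m)⁻¹ := sub_eq_zero.mp h
      rw [pow_add, h', inv_mul_cancel₀ hune]
  set u : ℂ := w ^ m with hudef
  have huN : u ^ N = 1 := by
    rw [hudef, ← pow_mul, mul_comm, pow_mul, hwN, one_pow]
  -- Step F : |u| = 1, hence |2b| ≤ 2
  have habs : ‖u‖ = 1 := by
    have h := congrArg (‖·‖) huN
    rw [norm_pow, norm_one] at h
    have h0 : (0:ℝ) ≤ ‖u‖ := norm_nonneg _
    rcases lt_trichotomy (‖u‖) 1 with hlt | heq | hgt
    · exfalso
      have := pow_lt_one₀ h0 hlt hN.ne'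
      rw [h] at this; exact lt_irrefl _ this
    · exact heq
    · exfalso
      have := one_lt_pow₀ hgt hN.ne'
      rw [h] at this; exact lt_irrefl _ this
  have habs2 : ‖2 * (b:ℂ)‖ ≤ 2 := by
    rw [← hu]
    calc ‖u + u⁻¹‖ ≤ ‖u‖ + ‖u⁻¹‖ := norm_add_le _ _
    _ = 2 := by rw [norm_inv, habs]; norm_num
  -- Step G : 2b is an algebraic integer, hence an integer
  have hIu : IsIntegral ℤ u :=
    ⟨X ^ N - C 1, monic_X_pow_sub_C 1 hN.ne', by simp [huN]⟩
  have huinv : u⁻¹ = u ^ (N - 1) := by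
    have h : u ^ (N - 1) * u = 1 := by
      rw [← pow_succ, show N - 1 + 1 = N by omega, huN]
    exact (inv_eq_of_mul_eq_one_left h).symm ▸ rfl
  have hIuinv : IsIntegral ℤ (u⁻¹) := by rw [huinv]; exact hIu.pow _
  have hIb : IsIntegral ℤ ((2 * b : ℚ) : ℂ) := by
    have : ((2 * b : ℚ) : ℂ) = u + u⁻¹ := by rw [hu]; push_cast; ring
    rw [this]; exact hIu.add hIuinv
  have hIbQ : IsIntegral ℤ (2 * b : ℚ) := by
    have : ((2 * b : ℚ) : ℂ) = algebraMap ℚ ℂ (2 * b) := by simp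
    rw [this] at hIb
    exact (isIntegral_algebraMap_iff (algebraMap ℚ ℂ).injective).mp hIb
  obtain ⟨k, hk⟩ := IsIntegrallyClosed.isIntegral_iff.mp hIbQ
  have hk' : (k : ℚ) = 2 * b := by exact_mod_cast hk
  -- Step H : conclude
  have hbound : |(2 * b : ℚ)| ≤ 2 := by
    have h2 := habs2
    rw [show (2 * (b:ℂ)) = (((2 * b : ℚ) : ℝ) : ℂ) by push_cast; ring] at h2
    rw [Complex.norm_real, Real.norm_eq_abs] at h2
    exact_mod_cast h2
  have hkb : |k| ≤ 2 := by
    rw [← hk'] at hbound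
    exact_mod_cast hbound
  simp only [Set.mem_insert_iff, Set.mem_singleton_iff, not_or] at hb
  obtain ⟨h0, h1, h2, h3, h4⟩ := hb
  obtain ⟨hka, hkb2⟩ := abs_le.mp hkb
  interval_cases k <;> push_cast at hk' <;>
    [exact h2 (by linarith); exact h4 (by linarith); exact h0 (by linarith);
     exact h3 (by linarith); exact h1 (by linarith)]
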